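/- Under the hypotheses of the previous statement with S(0) > 0 and S(ℓ) > 0 for all ℓ ≥ 0, one has ∫₀^ℓ Z₂(x)* Z₂(x) dx ≤ S(0)⁻¹ for every ℓ > 0; in particular each column of Z₂ is square integrable on [0,∞). -/

import Mathlib

open Matrix MeasureTheory
open scoped ComplexOrder

private lemma prodDiff {ι : Type*} (s : Finset ι) (f : ι → ℝ → ℂ) (x : ℝ) :
    (∀ i ∈ s, DifferentiableAt ℝ (f i) x) →
    DifferentiableAt ℝ (fun y => ∏ i ∈ s, f i y) x := by
  classical
  induction s using Finset.induction_on with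
  | empty => intro _; simpa using differentiableAt_const (1 : ℂ)
  | insert _ _ ha ih =>
    intro hf
    simp only [Finset.prod_insert ha]
    exact (hf _ (Finset.mem_insert_self _ _)).mul
      (ih fun i hi => hf i (Finset.mem_insert_of_mem hi))

private lemma detDiff {n : ℕ} (M : ℝ → Matrix (Fin n) (Fin n) ℂ) (x : ℝ)
    (hM : ∀ i j, DifferentiableAt ℝ (fun y => M y i j) x) :
    DifferentiableAt ℝ (fun y => (M y).det) x := by
  simp only [Matrix.det_apply']
  exact DifferentiableAt.fun_sum fun σ _ =>
    ((prodDiff Finset.univ (fun i y => M y (σ i) i) x fun i _ => hM _ _).const_mul _)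

private lemma adjDiff {n : ℕ} (M : ℝ → Matrix (Fin n) (Fin n) ℂ) (x : ℝ)
    (hM : ∀ i j, DifferentiableAt ℝ (fun y => M y i j) x) (i j : Fin n) :
    DifferentiableAt ℝ (fun y => (M y).adjugate i j) x := by
  simp only [Matrix.adjugate_apply]
  apply detDiff
  intro a b
  by_cases hai : a = j
  · simp only [hai, Matrix.updateRow_self]
    exact differentiableAt_const _
  · simp only [Matrix.updateRow_ne hai]
    exact hM a b

private lemma diag_re_nonneg {n : ℕ} {M : Matrix (Fin n) (Fin n) ℂ} (hM : M.PosDef)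
    (p : Fin n) : 0 ≤ (M p p).re := by
  have hv : (Pi.single p 1 : Fin n → ℂ) ≠ 0 := by
    intro hcon
    have := congrFun hcon p
    simp at this
  have h := hM.dotProduct_mulVec_pos hv
  have hd : (star (Pi.single p 1 : Fin n → ℂ)) ⬝ᵥ (M *ᵥ Pi.single p 1) = M p p := by
    simp [dotProduct, Matrix.mulVec, Pi.single_apply, mul_ite, ite_mul,
      Finset.sum_ite_eq, Finset.sum_ite_eq', apply_ite (starRingEnd ℂ)]
  rw [hd] at h
  rw [Complex.lt_def] at h
  exact le_of_lt h.1

/-- with `S(x) > 0` for all `x ≥ 0`, one has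
`∫₀^ℓ Z₂* Z₂ dx ≤ S(0)⁻¹` for every `ℓ > 0`; in particular each column of
`Z₂` is square integrable on `[0,∞)`. -/
theorem stmt_10 (n h : ℕ)
    (Pi : ℝ → Matrix (Fin n) (Fin h ⊕ Fin h) ℂ)
    (hPicont : ∀ i p, Continuous fun x => Pi x i p)
    (S : ℝ → Matrix (Fin n) (Fin n) ℂ)
    (hSpos : ∀ x ≥ (0 : ℝ), (S x).PosDef)
    (hS : ∀ x i p, HasDerivAt (fun y => S y i p)
      (((Pi x * (Matrix.fromBlocks 0 0 0 1 : Matrix (Fin h ⊕ Fin h) (Fin h ⊕ Fin h) ℂ) * (Pi x)ᴴ : Matrix (Fin n) (Fin n) ℂ)) i p) x)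
    (Z2 : ℝ → Matrix (Fin h) (Fin n) ℂ)
    (hZ2 : ∀ x i p, Z2 x i p = ((Pi x)ᴴ * (S x)⁻¹) (Sum.inr i) p) :
    (∀ ℓ > (0 : ℝ),
      ((S 0)⁻¹ - Matrix.of fun i p => ∫ x in (0 : ℝ)..ℓ, ((Z2 x)ᴴ * Z2 x) i p).PosSemidef) ∧
    (∀ p : Fin n, IntegrableOn (fun x => ∑ i, ‖Z2 x i p‖ ^ 2) (Set.Ici (0 : ℝ))) := by
  classical
  set S' : ℝ → Matrix (Fin n) (Fin n) ℂ :=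
    fun x => Pi x * (Matrix.fromBlocks 0 0 0 1 : Matrix (Fin h ⊕ Fin h) (Fin h ⊕ Fin h) ℂ) * (Pi x)ᴴ with hS'def
  have hSd : ∀ x i p, HasDerivAt (fun y => S y i p) (S' x i p) x := hS
  -- continuity facts
  have hPiC : Continuous Pi := continuous_matrix fun i p => hPicont i p
  have hS'C : Continuous S' :=
    (hPiC.matrix_mul continuous_const).matrix_mul hPiC.matrix_conjTranspose
  have hSC : Continuous S := continuous_matrix fun i p =>
    continuous_iff_continuousAt.mpr fun x => (hSd x i p).differentiableAt.continuousAt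
  have hdetC : Continuous fun x => (S x).det := hSC.matrix_det
  have hdet_ne : ∀ x : ℝ, 0 ≤ x → (S x).det ≠ 0 := fun x hx => (hSpos x hx).det_pos.ne'
  have hSdiff : ∀ (x : ℝ) i p, DifferentiableAt ℝ (fun y => S y i p) x :=
    fun x i p => (hSd x i p).differentiableAt
  -- differentiability of the inverse entries
  have hFdiff : ∀ x : ℝ, 0 ≤ x → ∀ i p, DifferentiableAt ℝ (fun y => (S y)⁻¹ i p) x := by
    intro x hx i p
    have h1 : (fun y => (S y)⁻¹ i p) =
        fun y => ((S y).det)⁻¹ * (S y).adjugate i p := by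
      funext y
      rw [Matrix.inv_def, Ring.inverse_eq_inv', Matrix.smul_apply, smul_eq_mul]
    rw [h1]
    exact ((detDiff S x (hSdiff x)).inv (hdet_ne x hx)).mul (adjDiff S x (hSdiff x) i p)
  have hFcontOn : ∀ i p, ContinuousOn (fun x => (S x)⁻¹ i p) (Set.Ici (0 : ℝ)) :=
    fun i p x hx => ((hFdiff x hx i p).continuousAt).continuousWithinAt
  -- the derivative of the inverse
  have hmulder : ∀ x : ℝ, 0 ≤ x →
      S x * Matrix.of (fun i p => deriv (fun y => (S y)⁻¹ i p) x) = -(S' x * (S x)⁻¹) := by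
    intro x hx
    ext i p
    have hd : ∀ (k : Fin n) q, HasDerivAt (fun y => (S y)⁻¹ k q)
        (deriv (fun y => (S y)⁻¹ k q) x) x := fun k q => (hFdiff x hx k q).hasDerivAt
    have h1 : HasDerivAt (fun y => ∑ k, S y i k * (S y)⁻¹ k p)
        (∑ k, (S' x i k * (S x)⁻¹ k p + S x i k * deriv (fun y => (S y)⁻¹ k p) x)) x :=
      HasDerivAt.fun_sum fun k _ => (hSd x i k).mul (hd k p)
    have h2 : HasDerivAt (fun y => ∑ k, S y i k * (S y)⁻¹ k p) 0 x := by
      have hev : (fun y => ∑ k, S y i k * (S y)⁻¹ k p)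
          =ᶠ[nhds x] fun _ => (1 : Matrix (Fin n) (Fin n) ℂ) i p := by
        have hne : ∀ᶠ y in nhds x, (S y).det ≠ 0 :=
          (hdetC.continuousAt).eventually_ne (hdet_ne x hx)
        filter_upwards [hne] with y hy
        have h3 : S y * (S y)⁻¹ = 1 := Matrix.mul_nonsing_inv (S y) (isUnit_iff_ne_zero.mpr hy)
        calc ∑ k, S y i k * (S y)⁻¹ k p = (S y * (S y)⁻¹) i p := (Matrix.mul_apply).symm
          _ = (1 : Matrix (Fin n) (Fin n) ℂ) i p := by rw [h3]
      exact (hasDerivAt_const x _).congr_of_eventuallyEq hev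
    have h0 := h1.unique h2
    rw [Finset.sum_add_distrib] at h0
    simp only [Matrix.mul_apply, Matrix.of_apply, Matrix.neg_apply]
    linear_combination h0
  have hF'mat : ∀ x : ℝ, 0 ≤ x →
      Matrix.of (fun i p => deriv (fun y => (S y)⁻¹ i p) x)
        = -((S x)⁻¹ * S' x * (S x)⁻¹) := by
    intro x hx
    have hu : IsUnit (S x).det := isUnit_iff_ne_zero.mpr (hdet_ne x hx)
    calc Matrix.of (fun i p => deriv (fun y => (S y)⁻¹ i p) x)
        = (S x)⁻¹ * (S x * Matrix.of (fun i p => deriv (fun y => (S y)⁻¹ i p) x)) :=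
          (Matrix.nonsing_inv_mul_cancel_left _ _ hu).symm
      _ = (S x)⁻¹ * -(S' x * (S x)⁻¹) := by rw [hmulder x hx]
      _ = -((S x)⁻¹ * S' x * (S x)⁻¹) := by
          rw [Matrix.mul_neg]
          exact congrArg Neg.neg (Matrix.mul_assoc _ _ _).symm
  have hF' : ∀ x : ℝ, 0 ≤ x → ∀ i p, HasDerivAt (fun y => (S y)⁻¹ i p)
      (-(((S x)⁻¹ * S' x * (S x)⁻¹) i p)) x := by
    intro x hx i p
    have hder := (hFdiff x hx i p).hasDerivAt
    have heq : deriv (fun y => (S y)⁻¹ i p) x = -(((S x)⁻¹ * S' x * (S x)⁻¹) i p) := by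
      have := congrFun (congrFun (hF'mat x hx) i) p
      simpa [Matrix.neg_apply] using this
    rwa [heq] at hder
  -- Z2 in matrix form
  set J : Matrix (Fin h) (Fin h ⊕ Fin h) ℂ :=
    Matrix.of fun (i : Fin h) (a : Fin h ⊕ Fin h) => if a = Sum.inr i then (1 : ℂ) else 0
    with hJdef
  have hZ2x : ∀ x, Z2 x = J * ((Pi x)ᴴ * (S x)⁻¹) := by
    intro x
    ext i p
    rw [hZ2]
    simp [hJdef, Matrix.mul_apply, ite_mul, one_mul, zero_mul]
  have hJJ : Jᴴ * J = (Matrix.fromBlocks 0 0 0 1 : Matrix (Fin h ⊕ Fin h) (Fin h ⊕ Fin h) ℂ) := by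
    ext a b
    cases a <;> cases b <;>
      simp [hJdef, Matrix.mul_apply, Matrix.conjTranspose_apply, Matrix.one_apply,
        apply_ite (starRingEnd ℂ), ite_mul, mul_ite, Finset.sum_ite_eq, Finset.sum_ite_eq']
  have hZZ : ∀ x : ℝ, 0 ≤ x → (Z2 x)ᴴ * Z2 x = (S x)⁻¹ * S' x * (S x)⁻¹ := by
    intro x hx
    have hH : ((S x)⁻¹)ᴴ = (S x)⁻¹ := ((hSpos x hx).inv).1
    rw [hZ2x x, Matrix.conjTranspose_mul, Matrix.mul_assoc,
      ← Matrix.mul_assoc Jᴴ J _, hJJ, Matrix.conjTranspose_mul,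
      Matrix.conjTranspose_conjTranspose, hH, hS'def]
    simp only [Matrix.mul_assoc]
  -- FTC
  have hprodContOn : ∀ i p,
      ContinuousOn (fun x => ((S x)⁻¹ * S' x * (S x)⁻¹) i p) (Set.Ici (0 : ℝ)) := by
    intro i p
    rw [continuousOn_iff_continuous_restrict]
    have hFr : Continuous fun x : Set.Ici (0 : ℝ) => (S x.1)⁻¹ :=
      continuous_matrix fun i q => continuousOn_iff_continuous_restrict.mp (hFcontOn i q)
    have hM : Continuous fun x : Set.Ici (0 : ℝ) => (S x.1)⁻¹ * S' x.1 * (S x.1)⁻¹ :=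
      (hFr.matrix_mul (hS'C.comp continuous_subtype_val)).matrix_mul hFr
    exact (continuous_apply p).comp ((continuous_apply i).comp hM)
  have hkey : ∀ ℓ : ℝ, 0 < ℓ → ∀ i p,
      (∫ x in (0 : ℝ)..ℓ, ((Z2 x)ᴴ * Z2 x) i p) = (S 0)⁻¹ i p - (S ℓ)⁻¹ i p := by
    intro ℓ hℓ i p
    have huIcc : Set.uIcc (0 : ℝ) ℓ = Set.Icc 0 ℓ := Set.uIcc_of_le hℓ.le
    have hcongr : (∫ x in (0 : ℝ)..ℓ, ((Z2 x)ᴴ * Z2 x) i p)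
        = ∫ x in (0 : ℝ)..ℓ, ((S x)⁻¹ * S' x * (S x)⁻¹) i p := by
      apply intervalIntegral.integral_congr
      intro x hx
      rw [huIcc] at hx
      show ((Z2 x)ᴴ * Z2 x) i p = ((S x)⁻¹ * S' x * (S x)⁻¹) i p
      rw [hZZ x hx.1]
    rw [hcongr]
    have hint : IntervalIntegrable (fun x => ((S x)⁻¹ * S' x * (S x)⁻¹) i p)
        volume 0 ℓ := by
      apply ContinuousOn.intervalIntegrable
      apply (hprodContOn i p).mono
      rw [huIcc]
      exact fun x hx => hx.1
    have hder : ∀ x ∈ Set.uIcc (0 : ℝ) ℓ, HasDerivAt (fun y => -((S y)⁻¹ i p))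
        (((S x)⁻¹ * S' x * (S x)⁻¹) i p) x := by
      intro x hx
      rw [huIcc] at hx
      simpa using (hF' x hx.1 i p).fun_neg
    have := intervalIntegral.integral_eq_sub_of_hasDerivAt hder hint
    rw [this]
    ring
  constructor
  · intro ℓ hℓ
    have heq : (S 0)⁻¹ - Matrix.of (fun i p => ∫ x in (0 : ℝ)..ℓ, ((Z2 x)ᴴ * Z2 x) i p)
        = (S ℓ)⁻¹ := by
      ext i p
      rw [Matrix.sub_apply, Matrix.of_apply, hkey ℓ hℓ i p]
      ring
    rw [heq]
    exact ((hSpos ℓ hℓ.le).inv).posSemidef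
  · intro p
    have hf0 : ∀ x : ℝ, 0 ≤ ∑ i, ‖Z2 x i p‖ ^ 2 :=
      fun x => Finset.sum_nonneg fun i _ => sq_nonneg _
    -- continuity
    have hFr : Continuous fun x : Set.Ici (0 : ℝ) => (S x.1)⁻¹ :=
      continuous_matrix fun i q => continuousOn_iff_continuous_restrict.mp (hFcontOn i q)
    have hZ2contr : Continuous fun x : Set.Ici (0 : ℝ) => Z2 x.1 := by
      have he : (fun x : Set.Ici (0 : ℝ) => Z2 x.1)
          = fun x : Set.Ici (0 : ℝ) => J * ((Pi x.1)ᴴ * (S x.1)⁻¹) := by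
        funext x; rw [hZ2x]
      rw [he]
      exact continuous_const.matrix_mul
        (((hPiC.comp continuous_subtype_val).matrix_conjTranspose).matrix_mul hFr)
    have hfcontOn : ContinuousOn (fun x => ∑ i, ‖Z2 x i p‖ ^ 2) (Set.Ici (0 : ℝ)) := by
      rw [continuousOn_iff_continuous_restrict]
      exact continuous_finset_sum _ fun i _ =>
        (((continuous_apply p).comp ((continuous_apply i).comp hZ2contr)).norm.pow 2)
    have hIoc : ∀ b : ℝ, IntegrableOn (fun x => ∑ i, ‖Z2 x i p‖ ^ 2) (Set.Ioc 0 b) := by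
      intro b
      exact ((hfcontOn.mono Set.Icc_subset_Ici_self).integrableOn_Icc).mono_set
        Set.Ioc_subset_Icc_self
    have hc : ∀ x : ℝ, ((∑ i, ‖Z2 x i p‖ ^ 2 : ℝ) : ℂ) = ((Z2 x)ᴴ * Z2 x) p p := by
      intro x
      simp only [Matrix.mul_apply, Matrix.conjTranspose_apply]
      push_cast
      refine Finset.sum_congr rfl fun i _ => ?_
      rw [Complex.star_def]
      exact (RCLike.conj_mul _).symm
    have hC : ∀ b : ℝ, 0 < b →
        (∫ x in (0 : ℝ)..b, ∑ i, ‖Z2 x i p‖ ^ 2) ≤ ((S 0)⁻¹ p p).re := by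
      intro b hb
      have h1 : ((∫ x in (0 : ℝ)..b, ∑ i, ‖Z2 x i p‖ ^ 2 : ℝ) : ℂ)
          = (S 0)⁻¹ p p - (S b)⁻¹ p p := by
        calc ((∫ x in (0 : ℝ)..b, ∑ i, ‖Z2 x i p‖ ^ 2 : ℝ) : ℂ)
            = ∫ x in (0 : ℝ)..b, ((∑ i, ‖Z2 x i p‖ ^ 2 : ℝ) : ℂ) :=
              (RCLike.intervalIntegral_ofReal).symm
          _ = ∫ x in (0 : ℝ)..b, ((Z2 x)ᴴ * Z2 x) p p :=
              intervalIntegral.integral_congr fun x _ => hc x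
          _ = (S 0)⁻¹ p p - (S b)⁻¹ p p := hkey b hb p p
      have h2 := congrArg Complex.re h1
      rw [Complex.ofReal_re, Complex.sub_re] at h2
      have h3 : 0 ≤ ((S b)⁻¹ p p).re := diag_re_nonneg (hSpos b hb.le).inv p
      linarith
    have hIoi : IntegrableOn (fun x => ∑ i, ‖Z2 x i p‖ ^ 2) (Set.Ioi (0 : ℝ)) := by
      apply integrableOn_Ioi_of_intervalIntegral_norm_bounded (((S 0)⁻¹ p p).re) 0
        (fun i : ℕ => hIoc ((i : ℝ) + 1))
        (Filter.tendsto_atTop_add_const_right _ 1 tendsto_natCast_atTop_atTop)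
      refine Filter.Eventually.of_forall fun i => ?_
      have hnorm : (fun x : ℝ => ‖∑ i, ‖Z2 x i p‖ ^ 2‖) = fun x => ∑ i, ‖Z2 x i p‖ ^ 2 :=
        funext fun x => Real.norm_of_nonneg (hf0 x)
      rw [hnorm]
      exact hC _ (by positivity)
    rw [integrableOn_Ici_iff_integrableOn_Ioi]
    exact hIoi
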